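/- Let α be a real number with −2 < α < −1 and set κ_α = 1 + 2/(−1 − α). Let V = {p_1, p_2, p_3, p_4, p_5} and let f : 2^V → ℝ be the cut capacity function of the graph on V with edges {p_1, p_2}, {p_1, p_3}, {p_1, p_5}, {p_3, p_4}, {p_3, p_5} and capacities c(p_1, p_3) = c(p_3, p_5) = 1, c(p_1, p_5) = 2, c(p_1, p_2) = c(p_3, p_4) = κ_α. Then (p_1, p_2, p_3, p_4, p_5) is an α-ordering of V with respect to f, and (p_4, p_5) is not a contractible pair with respect to f. -/

import Mathlib

open Finset

def prefSet {V : Type*} [DecidableEq V] {n : ℕ} (v : Fin n → V) (i : Fin n) : Finset V :=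
  (Finset.univ.filter (fun k : Fin n => k < i)).image v

def IsAlphaOrdering {V : Type*} [DecidableEq V] {n : ℕ} (α : ℝ)
    (f : Finset V → ℝ) (v : Fin n → V) : Prop :=
  ∀ i j : Fin n, i ≤ j →
    f (insert (v i) (prefSet v i)) + α * f {v i} ≤
      f (insert (v j) (prefSet v i)) + α * f {v j}

def ContractiblePair {V : Type*} [DecidableEq V] [Fintype V]
    (f : Finset V → ℝ) (u w : V) : Prop :=
  ∀ X : Finset V, X ⊂ Finset.univ → (X ∩ ({u, w} : Finset V)).card = 1 →
    Finset.univ.inf' ⟨u, Finset.mem_univ u⟩ (fun x => f {x}) ≤ f X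

def cutFun {V : Type*} [DecidableEq V] [Fintype V] (c : V → V → ℝ) (X : Finset V) : ℝ :=
  ∑ u ∈ X, ∑ w ∈ Xᶜ, c u w

/-- Capacities of the graph on `{p₁, …, p₅}` (here `pᵢ = i - 1 : Fin 5`) with edges
`{p₁, p₃}, {p₃, p₅}` of capacity `1`, `{p₁, p₅}` of capacity `2`, and
`{p₁, p₂}, {p₃, p₄}` of capacity `k`. -/
def cap15 (k : ℝ) : Fin 5 → Fin 5 → ℝ := fun u w =>
  if (u = 0 ∧ w = 2) ∨ (u = 2 ∧ w = 0) then 1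
  else if (u = 2 ∧ w = 4) ∨ (u = 4 ∧ w = 2) then 1
  else if (u = 0 ∧ w = 4) ∨ (u = 4 ∧ w = 0) then 2
  else if (u = 0 ∧ w = 1) ∨ (u = 1 ∧ w = 0) then k
  else if (u = 2 ∧ w = 3) ∨ (u = 3 ∧ w = 2) then k
  else 0

private lemma cutFun_expand (c : Fin 5 → Fin 5 → ℝ) (X : Finset (Fin 5)) :
    cutFun c X = ∑ u : Fin 5, ∑ w : Fin 5,
      (if u ∈ X then 1 else 0) * (if w ∈ X then 0 else 1) * c u w := by
  have h : ∀ (s : Finset (Fin 5)) (g : Fin 5 → ℝ),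
      ∑ u ∈ s, g u = ∑ u : Fin 5, if u ∈ s then g u else 0 := by
    intro s g
    rw [Finset.sum_ite_mem, Finset.univ_inter]
  unfold cutFun
  rw [h X]
  refine Finset.sum_congr rfl fun u _ => ?_
  by_cases hu : u ∈ X
  · rw [h Xᶜ]
    simp only [hu, if_true, one_mul, Finset.mem_compl]
    refine Finset.sum_congr rfl fun w _ => ?_
    by_cases hw : w ∈ X <;> simp [hw]
  · simp [hu]

set_option maxHeartbeats 1000000 in
/-- Case 2 of Proposition 6.1 (`-2 < α < -1`, `κ_α = 1 + 2 / (-1 - α)`): the ordering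
`(p₁, p₂, p₃, p₄, p₅)` is an `α`-ordering of the cut function, but `(p₄, p₅)` is not
a contractible pair. -/
theorem stmt_15 (α : ℝ) (hα₁ : -2 < α) (hα₂ : α < -1) :
    IsAlphaOrdering α (cutFun (cap15 (1 + 2 / (-1 - α)))) (id : Fin 5 → Fin 5) ∧
      ¬ ContractiblePair (cutFun (cap15 (1 + 2 / (-1 - α)))) 3 4 := by
  have ht : (0:ℝ) < -1-α := by linarith
  have hd : (2:ℝ) < 2/(-1-α) := by
    rw [lt_div_iff₀ ht]; nlinarith
  have hid : α * (2/(-1-α)) = -2 - 2/(-1-α) := by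
    field_simp; ring
  constructor
  · intro i j hij
    fin_cases i <;> fin_cases j <;>
      first
        | exact le_refl _
        | exact absurd hij (by decide)
        | (simp only [id_eq]
           rw [cutFun_expand, cutFun_expand, cutFun_expand, cutFun_expand]
           simp (config := {decide := true}) [Fin.sum_univ_five, cap15]
           nlinarith [hid, ht, hd, mul_pos ht (sub_pos.mpr hd),
             mul_pos ht ht])
  · intro h
    have h1 := h {2, 3} (by decide) (by decide)
    have h2 : cutFun (cap15 (1 + 2 / (-1 - α))) {2, 3} = 2 := by
      rw [cutFun_expand]
      simp (config := {decide := true}) [Fin.sum_univ_five, cap15]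
      norm_num
    have h3 : (2:ℝ) < Finset.univ.inf' ⟨3, Finset.mem_univ 3⟩
        (fun x : Fin 5 => cutFun (cap15 (1 + 2 / (-1 - α))) {x}) := by
      refine (Finset.lt_inf'_iff _).2 ?_
      intro x _
      fin_cases x <;> rw [cutFun_expand] <;>
        simp (config := {decide := true}) [Fin.sum_univ_five, cap15] <;>
        nlinarith [hd, ht]
    rw [h2] at h1
    linarith
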